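/- Suppose the affine span of z(𝒢_k) is all of ℝⁿ (so the convex hull C of z(𝒢_k) has dimension n). Then there exists θ̂ ∈ ℝⁿ with L(θ̂) = sup_{θ ∈ ℝⁿ} L(θ) if and only if the target vector t lies in the (topological) interior of C. -/

import Mathlib

open scoped RealInnerProductSpace BigOperators

section ErgmAux

open Real Set Filter Topology

variable {E : Type*} [NormedAddCommGroup E] [InnerProductSpace ℝ E] [FiniteDimensional ℝ E]
variable {ι : Type*} [Fintype ι] [Nonempty ι]

/-- Partition function. -/
noncomputable def ergmS (v : ι → E) (θ : E) : ℝ := ∑ i, Real.exp ⟪θ, v i⟫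

/-- Log-likelihood. -/
noncomputable def ergmf (v : ι → E) (t : E) (θ : E) : ℝ := ⟪θ, t⟫ - Real.log (ergmS v θ)

lemma ergmS_pos (v : ι → E) (θ : E) : 0 < ergmS v θ :=
  Finset.sum_pos (fun _ _ => Real.exp_pos _) Finset.univ_nonempty

lemma exp_inner_le (v : ι → E) (θ : E) {x : E} (hx : x ∈ convexHull ℝ (Set.range v)) :
    Real.exp ⟪θ, x⟫ ≤ ergmS v θ := by
  have hne : (Finset.univ : Finset ι).Nonempty := Finset.univ_nonempty
  set M := Finset.univ.sup' hne (fun i => ⟪θ, v i⟫) with hM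
  have hlin : IsLinearMap ℝ (fun y : E => ⟪θ, y⟫) :=
    ⟨fun a b => inner_add_right θ a b, fun c a => real_inner_smul_right θ a c⟩
  have hsub : convexHull ℝ (Set.range v) ⊆ {y : E | ⟪θ, y⟫ ≤ M} := by
    apply convexHull_min _ (convex_halfSpace_le hlin M)
    rintro _ ⟨i, rfl⟩
    exact Finset.le_sup' (fun i => ⟪θ, v i⟫) (Finset.mem_univ i)
  obtain ⟨i0, _, hi0⟩ := Finset.exists_mem_eq_sup' hne (fun i => ⟪θ, v i⟫)
  calc Real.exp ⟪θ, x⟫ ≤ Real.exp M := Real.exp_le_exp.2 (hsub hx)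
    _ = Real.exp ⟪θ, v i0⟫ := by rw [hM, hi0]
    _ ≤ ergmS v θ :=
      Finset.single_le_sum (fun i _ => (Real.exp_pos ⟪θ, v i⟫).le) (Finset.mem_univ i0)

lemma ergmf_lt (v : ι → E) (t : E) (u : E)
    (hle : ∀ i, ⟪u, v i⟫ ≤ ⟪u, t⟫) (hlt : ∃ i, ⟪u, v i⟫ < ⟪u, t⟫) (θ : E) :
    ergmf v t θ < ergmf v t (θ + u) := by
  obtain ⟨i0, hi0⟩ := hlt
  have h1 : ergmS v (θ + u) < Real.exp ⟪u, t⟫ * ergmS v θ := by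
    rw [ergmS, ergmS, Finset.mul_sum]
    apply Finset.sum_lt_sum
    · intro i _
      rw [inner_add_left, Real.exp_add, mul_comm]
      exact mul_le_mul_of_nonneg_right (Real.exp_le_exp.2 (hle i)) (Real.exp_pos _).le
    · refine ⟨i0, Finset.mem_univ i0, ?_⟩
      rw [inner_add_left, Real.exp_add, mul_comm]
      exact mul_lt_mul_of_pos_right (Real.exp_lt_exp.2 hi0) (Real.exp_pos _)
  have h2 : Real.log (ergmS v (θ + u)) < ⟪u, t⟫ + Real.log (ergmS v θ) := by
    calc Real.log (ergmS v (θ + u)) < Real.log (Real.exp ⟪u, t⟫ * ergmS v θ) :=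
          Real.log_lt_log (ergmS_pos v (θ + u)) h1
      _ = ⟪u, t⟫ + Real.log (ergmS v θ) := by
          rw [Real.log_mul (Real.exp_ne_zero _) (ergmS_pos v θ).ne', Real.log_exp]
  have h3 : ⟪θ + u, t⟫ = ⟪θ, t⟫ + ⟪u, t⟫ := inner_add_left θ u t
  rw [ergmf, ergmf, h3]
  linarith

lemma ergm_exists_max (v : ι → E) (t : E)
    (ht : t ∈ interior (convexHull ℝ (Set.range v))) :
    ∃ θhat : E, ∀ θ, ergmf v t θ ≤ ergmf v t θhat := by
  obtain ⟨ε, hε, hball⟩ := Metric.mem_nhds_iff.1 (mem_interior_iff_mem_nhds.1 ht)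
  have hbound : ∀ θ : E, ergmf v t θ ≤ -(ε/2) * ‖θ‖ := by
    intro θ
    rcases eq_or_ne θ 0 with rfl | hθ
    · have h1 : ergmS v (0 : E) = (Fintype.card ι : ℝ) := by
        simp [ergmS]
      have h2 : (0:ℝ) ≤ Real.log (ergmS v (0 : E)) := by
        rw [h1]
        apply Real.log_nonneg
        exact_mod_cast Fintype.card_pos
      simp only [ergmf, inner_zero_left, norm_zero, mul_zero, zero_sub, neg_nonpos]
      exact h2
    · have hθn : (0:ℝ) < ‖θ‖ := norm_pos_iff.2 hθ
      set x : E := t + (ε/2) • ‖θ‖⁻¹ • θ with hx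
      have hxC : x ∈ convexHull ℝ (Set.range v) := by
        apply hball
        simp only [Metric.mem_ball, dist_eq_norm]
        have hxt : x - t = (ε/2) • ‖θ‖⁻¹ • θ := by rw [hx]; abel
        rw [hxt, norm_smul, norm_smul, norm_inv, norm_norm, Real.norm_eq_abs,
          abs_of_pos (by positivity : (0:ℝ) < ε/2), inv_mul_cancel₀ hθn.ne', mul_one]
        linarith
      have h1 := exp_inner_le v θ hxC
      have h2 : ⟪θ, x⟫ ≤ Real.log (ergmS v θ) :=
        (Real.le_log_iff_exp_le (ergmS_pos v θ)).2 h1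
      have h3 : ⟪θ, x⟫ = ⟪θ, t⟫ + (ε/2) * ‖θ‖ := by
        rw [hx, inner_add_right, real_inner_smul_right, real_inner_smul_right,
          real_inner_self_eq_norm_sq]
        field_simp
      rw [ergmf]
      rw [h3] at h2
      linarith
  have hcont : Continuous (ergmf v t) := by
    apply Continuous.sub
    · exact continuous_id.inner continuous_const
    · apply Continuous.log
      · exact continuous_finset_sum _ fun i _ =>
          Real.continuous_exp.comp (continuous_id.inner continuous_const)
      · intro x; exact (ergmS_pos v x).ne'
  set R : ℝ := max 1 ((2/ε) * (1 - ergmf v t 0)) with hR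
  have hR1 : (1:ℝ) ≤ R := le_max_left _ _
  have hcompact : IsCompact (Metric.closedBall (0:E) R) := isCompact_closedBall _ _
  obtain ⟨θhat, hmem, hmax⟩ := hcompact.exists_isMaxOn
    ⟨0, Metric.mem_closedBall_self (by linarith)⟩ hcont.continuousOn
  refine ⟨θhat, fun θ => ?_⟩
  by_cases hθ : θ ∈ Metric.closedBall (0:E) R
  · exact hmax hθ
  · have hnorm : R < ‖θ‖ := by
      have := hθ
      simp only [Metric.mem_closedBall, dist_zero_right, not_le] at this
      exact this
    have h0 : ergmf v t 0 ≤ ergmf v t θhat :=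
      hmax (Metric.mem_closedBall_self (by linarith))
    have hRe : 1 - ergmf v t 0 ≤ (ε/2) * R := by
      have hmr : (2/ε) * (1 - ergmf v t 0) ≤ R := le_max_right _ _
      have := mul_le_mul_of_nonneg_left hmr (by positivity : (0:ℝ) ≤ ε/2)
      calc 1 - ergmf v t 0 = (ε/2) * ((2/ε) * (1 - ergmf v t 0)) := by
            field_simp
          _ ≤ (ε/2) * R := this
    have hb := hbound θ
    nlinarith [mul_le_mul_of_nonneg_left hnorm.le (by positivity : (0:ℝ) ≤ ε/2)]

lemma ergm_no_max [CompleteSpace E] (v : ι → E) (t : E)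
    (hspan : affineSpan ℝ (Set.range v) = ⊤)
    (ht : t ∉ interior (convexHull ℝ (Set.range v))) (θhat : E) :
    ∃ θ, ergmf v t θhat < ergmf v t θ := by
  set C := convexHull ℝ (Set.range v) with hCdef
  have hC : Convex ℝ C := convex_convexHull ℝ _
  have hne : (interior C).Nonempty := by
    rw [hC.interior_nonempty_iff_affineSpan_eq_top, hCdef, affineSpan_convexHull]
    exact hspan
  obtain ⟨φ, hφ⟩ := geometric_hahn_banach_open_point hC.interior isOpen_interior ht
  obtain ⟨b, hb⟩ := hne
  have hCle : ∀ a ∈ C, φ a ≤ φ t := by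
    intro a ha
    have hcont : Continuous fun s : ℝ => φ (a + s • (b - a)) := by
      apply φ.continuous.comp
      exact continuous_const.add (continuous_id.smul continuous_const)
    have htd : Filter.Tendsto (fun s : ℝ => φ (a + s • (b - a))) (𝓝[>] 0)
        (𝓝 (φ a)) := by
      have h0 := hcont.tendsto 0
      simpa using h0.mono_left nhdsWithin_le_nhds
    refine le_of_tendsto htd ?_
    filter_upwards [Ioc_mem_nhdsGT_of_mem (Set.left_mem_Ico.2 one_pos)] with s hs
    exact (hφ _ (hC.add_smul_sub_mem_interior ha hb hs)).le
  set u : E := (InnerProductSpace.toDual ℝ E).symm φ with hu_def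
  have hu : ∀ x : E, ⟪u, x⟫ = φ x := fun x => InnerProductSpace.toDual_symm_apply
  have hvC : ∀ i, v i ∈ C := fun i => subset_convexHull ℝ _ ⟨i, rfl⟩
  have hle : ∀ i, ⟪u, v i⟫ ≤ ⟪u, t⟫ := fun i => by
    rw [hu, hu]; exact hCle _ (hvC i)
  have hlt : ∃ i, ⟪u, v i⟫ < ⟪u, t⟫ := by
    by_contra h
    push_neg at h
    have heq : ∀ i, φ (v i) = φ t := fun i =>
      le_antisymm (hCle _ (hvC i)) (by rw [← hu, ← hu]; exact h i)
    have hQ : affineSpan ℝ (Set.range v) ≤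
        AffineSubspace.comap (φ.toLinearMap.toAffineMap) (affineSpan ℝ {φ t}) := by
      rw [affineSpan_le]
      rintro _ ⟨i, rfl⟩
      show φ (v i) ∈ affineSpan ℝ {φ t}
      rw [heq i]
      exact mem_affineSpan ℝ (Set.mem_singleton _)
    have hbQ : b ∈ AffineSubspace.comap (φ.toLinearMap.toAffineMap) (affineSpan ℝ {φ t}) :=
      hQ (by rw [hspan]; trivial)
    have hφb : φ b = φ t :=
      (AffineSubspace.mem_affineSpan_singleton ℝ ℝ).1 hbQ
    exact absurd (hφ b hb) (by rw [hφb]; exact lt_irrefl _)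
  exact ⟨θhat + u, ergmf_lt v t u hle hlt θhat⟩

end ErgmAux

/-- If `C = convexHull(z(𝒢_k))` is top-dimensional, then the likelihood `L` attains its
supremum if and only if `t ∈ interior C`. -/
theorem ergm_MLE_exists_iff_interior (k n : ℕ) (hk : 0 < k) (hn : 0 < n)
    (z : SimpleGraph (Fin k) → EuclideanSpace ℝ (Fin n))
    (t : EuclideanSpace ℝ (Fin n))
    (L : EuclideanSpace ℝ (Fin n) → ℝ)
    (hL : L = fun θ => Real.exp
      (⟪θ, t⟫ - Real.log (∑ g : SimpleGraph (Fin k), Real.exp ⟪θ, z g⟫)))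
    (hdim : affineSpan ℝ (Set.range z) = ⊤) :
    (∃ θhat : EuclideanSpace ℝ (Fin n), ∀ θ, L θ ≤ L θhat) ↔
      t ∈ interior (convexHull ℝ (Set.range z)) := by
  have hLf : ∀ θ, L θ = Real.exp (ergmf z t θ) := by
    intro θ; rw [hL]; rfl
  constructor
  · rintro ⟨θhat, hmax⟩
    by_contra ht
    obtain ⟨θ, hθ⟩ := ergm_no_max z t hdim ht θhat
    have h := hmax θ
    rw [hLf, hLf, Real.exp_le_exp] at h
    exact absurd h (not_le.2 hθ)
  · intro ht
    obtain ⟨θhat, hθ⟩ := ergm_exists_max z t ht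
    exact ⟨θhat, fun θ => by rw [hLf, hLf, Real.exp_le_exp]; exact hθ θ⟩
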